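/- Every subgroup G of the symmetric group on a 6-element set whose natural action on the 6 elements is transitive contains an element of order 3 having no fixed points (equivalently, an element that is a product of two disjoint 3-cycles, i.e. acts with exactly two orbits, each of length 3). -/

import Mathlib

section Aux

open Equiv Equiv.Perm Finset

/-- Any permutation of 6 points whose order divides 9 has order dividing 3. -/
private lemma aux_ord_dvd_three (p : Equiv.Perm (Fin 6)) (h : orderOf p ∣ 9) :
    orderOf p ∣ 3 := by
  rw [← Equiv.Perm.lcm_cycleType] at h ⊢
  refine Multiset.lcm_dvd.mpr fun n hn => ?_
  have h2 : 2 ≤ n := Equiv.Perm.two_le_of_mem_cycleType hn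
  have h6 : n ≤ 6 := by
    calc n ≤ p.cycleType.sum := Multiset.single_le_sum (fun _ _ => Nat.zero_le _) _ hn
    _ = p.support.card := p.sum_cycleType
    _ ≤ 6 := by
      have := Finset.card_le_univ p.support
      simpa using this
  have hd : n ∣ 9 := (Multiset.dvd_lcm hn).trans h
  interval_cases n <;> revert hd <;> decide

/-- A permutation of 6 points of order 3 with a fixed point has support of size 3. -/
private lemma aux_supp_card (a : Equiv.Perm (Fin 6)) (h3 : orderOf a = 3) (x : Fin 6)
    (hx : a x = x) : a.support.card = 3 := by
  have hall : ∀ n ∈ a.cycleType, n = 3 := by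
    intro n hn
    have h2 : 2 ≤ n := Equiv.Perm.two_le_of_mem_cycleType hn
    have hd : n ∣ 3 := by
      have := Multiset.dvd_lcm hn
      rwa [Equiv.Perm.lcm_cycleType, h3] at this
    rcases (Nat.prime_three).eq_one_or_self_of_dvd _ hd with h | h
    · omega
    · exact h
  have hrepl := Multiset.eq_replicate_of_mem hall
  have hsum : a.support.card = 3 * Multiset.card a.cycleType := by
    rw [← Equiv.Perm.sum_cycleType, hrepl, Multiset.sum_replicate, smul_eq_mul,
      Multiset.card_replicate]
    ring
  have hne : a ≠ 1 := by
    intro h1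
    rw [h1, orderOf_one] at h3
    exact absurd h3 (by decide)
  have hk1 : Multiset.card a.cycleType ≠ 0 := by
    intro h0
    exact hne (Equiv.Perm.cycleType_eq_zero.mp (Multiset.card_eq_zero.mp h0))
  have hle : a.support.card ≤ 6 := by
    have := Finset.card_le_univ a.support
    simpa using this
  have hk2 : Multiset.card a.cycleType ≠ 2 := by
    intro h2
    rw [h2] at hsum
    have : a.support = Finset.univ := Finset.eq_univ_of_card _ (by simp [hsum])
    have hxmem : x ∈ a.support := this ▸ Finset.mem_univ x
    exact (Equiv.Perm.mem_support.mp hxmem) hx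
  omega

/-- A permutation of order dividing 3 which moves a point of a 3-element invariant set
moves all points of that set. -/
private lemma aux_moves (b : Equiv.Perm (Fin 6)) (hb : b ^ 3 = 1) (S : Finset (Fin 6))
    (hcard : S.card = 3) (hinv : ∀ y ∈ S, b y ∈ S) (y0 : Fin 6) (hy0 : y0 ∈ S)
    (hm : b y0 ≠ y0) : ∀ y ∈ S, b y ≠ y := by
  have hb3 : ∀ z, b (b (b z)) = z := by
    intro z
    have := congrArg (fun e : Equiv.Perm (Fin 6) => e z) hb
    simpa [pow_succ, Equiv.Perm.mul_apply] using this
  have h1 : b y0 ∈ S := hinv _ hy0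
  have h2 : b (b y0) ∈ S := hinv _ h1
  have d2 : b (b y0) ≠ b y0 := fun h => hm (b.injective h)
  have d3 : b (b y0) ≠ y0 := by
    intro h
    have := congrArg b h
    rw [hb3] at this
    exact hm this.symm
  have hsub : ({y0, b y0, b (b y0)} : Finset (Fin 6)) ⊆ S := by
    intro z hz
    simp only [Finset.mem_insert, Finset.mem_singleton] at hz
    rcases hz with rfl | rfl | rfl <;> assumption
  have hc3 : ({y0, b y0, b (b y0)} : Finset (Fin 6)).card = 3 := by
    rw [Finset.card_insert_of_notMem (by simp [Ne.symm hm, (Ne.symm d3)]),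
      Finset.card_insert_of_notMem (by simp [Ne.symm d2]), Finset.card_singleton]
  have hSeq : S = ({y0, b y0, b (b y0)} : Finset (Fin 6)) :=
    (Finset.eq_of_subset_of_card_le hsub (by rw [hcard, hc3])).symm
  intro y hy
  rw [hSeq] at hy
  simp only [Finset.mem_insert, Finset.mem_singleton] at hy
  rcases hy with rfl | rfl | rfl
  · exact hm
  · exact d2
  · rw [hb3]
    exact fun h => d3 h.symm

/-- A subgroup of `Perm (Fin 6)` of order 9 cannot fix pointwise the complement of a
3-element set. -/
private lemma aux_card_contra (P : Subgroup (Equiv.Perm (Fin 6))) (hP : Nat.card P = 9)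
    (p : Fin 6 → Prop) [DecidablePred p] (hp : (Finset.univ.filter p).card = 3)
    (hfix : ∀ q ∈ P, ∀ x, ¬ p x → q x = x)
    (hinvp : ∀ q ∈ P, ∀ x, p x → p (q x)) : False := by
  have hiff : ∀ q : ↥P, ∀ x, p x ↔ p ((q : Equiv.Perm (Fin 6)) x) := by
    intro q x
    constructor
    · exact hinvp q q.2 x
    · intro hqx
      by_contra hx
      rw [hfix q q.2 x hx] at hqx
      exact hx hqx
  let f : ↥P → Equiv.Perm {x // p x} := fun q =>
    Equiv.Perm.subtypePerm (q : Equiv.Perm (Fin 6)) (fun x => (hiff q x).symm)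
  have hfinj : Function.Injective f := by
    intro q1 q2 heq
    apply Subtype.ext
    apply Equiv.ext
    intro x
    by_cases hx : p x
    · have := congrArg (fun e => (e ⟨x, hx⟩ : {x // p x}).1) heq
      simpa [f, Equiv.Perm.subtypePerm] using this
    · rw [hfix q1 q1.2 x hx, hfix q2 q2.2 x hx]
  have hle : Nat.card ↥P ≤ Nat.card (Equiv.Perm {x // p x}) :=
    Nat.card_le_card_of_injective f hfinj
  have hcard : Nat.card (Equiv.Perm {x // p x}) = 6 := by
    rw [Nat.card_eq_fintype_card, Fintype.card_perm, Fintype.card_subtype, hp]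
    decide
  omega

end Aux

/-- Every subgroup of `S₆` acting transitively on the 6 elements
contains an element of order 3 without fixed points (i.e. a product of two
disjoint 3-cycles). -/
theorem stmt_3 (G : Subgroup (Equiv.Perm (Fin 6)))
    (htrans : ∀ a b : Fin 6, ∃ g ∈ G, g a = b) :
    ∃ g ∈ G, orderOf g = 3 ∧ ∀ x : Fin 6, g x ≠ x := by
  classical
  -- orbit-stabilizer: 6 * |Stab x| = |G|
  have key : ∀ x : Fin 6, 6 * Nat.card (MulAction.stabilizer G x) = Nat.card G := by
    intro x
    have horb : MulAction.orbit G x = Set.univ := by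
      apply Set.eq_univ_of_forall
      intro b
      obtain ⟨g, hg, hgb⟩ := htrans x b
      exact ⟨⟨g, hg⟩, hgb⟩
    have := Nat.card_congr (MulAction.orbitProdStabilizerEquivGroup G x)
    rw [Nat.card_prod] at this
    rw [← this, horb]
    congr 1
    rw [Nat.card_congr (Equiv.Set.univ _)]
    simp
  have h6 : 6 ∣ Nat.card G := ⟨_, (key 0).symm⟩
  have h3 : (3 : ℕ) ∣ Nat.card G := dvd_trans (by norm_num) h6
  haveI : Fact (Nat.Prime 3) := ⟨by norm_num⟩
  by_cases h9 : (9 : ℕ) ∣ Nat.card G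
  · -- Case B : 9 divides |G|; take a subgroup of order 9
    obtain ⟨H, hH⟩ := Sylow.exists_subgroup_card_pow_prime (G := ↥G) 3
      (n := 2) (by rwa [show (3:ℕ)^2 = 9 by norm_num])
    set P : Subgroup (Equiv.Perm (Fin 6)) := H.map G.subtype with hPdef
    have hPle : P ≤ G := Subgroup.map_subtype_le H
    have hPcard : Nat.card P = 9 := by
      rw [hPdef, ← Nat.card_congr (Subgroup.equivMapOfInjective H G.subtype
        (Subgroup.subtype_injective G)).toEquiv, hH]
      norm_num
    have hc : ∀ p ∈ P, ∀ q ∈ P, p * q = q * p := by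
      intro p hp q hq
      have := IsPGroup.commutative_of_card_eq_prime_sq (p := 3) (G := ↥P)
        (by rw [hPcard]; norm_num) ⟨p, hp⟩ ⟨q, hq⟩
      exact congrArg Subtype.val this
    have hordP : ∀ p ∈ P, orderOf p ∣ 3 := by
      intro p hp
      apply aux_ord_dvd_three
      have : orderOf (⟨p, hp⟩ : ↥P) ∣ 9 := hPcard ▸ orderOf_dvd_natCard _
      rwa [Subgroup.orderOf_mk] at this
    have hord3 : ∀ p ∈ P, p ≠ 1 → orderOf p = 3 := by
      intro p hp hp1
      rcases (Nat.prime_three).eq_one_or_self_of_dvd _ (hordP p hp) with h | h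
      · exact absurd (orderOf_eq_one_iff.mp h) hp1
      · exact h
    have hcube : ∀ p ∈ P, p ^ 3 = 1 := fun p hp =>
      orderOf_dvd_iff_pow_eq_one.mp (hordP p hp)
    -- main claim
    have hclaim : ∃ p ∈ P, p ≠ 1 ∧ ∀ x : Fin 6, p x ≠ x := by
      by_contra hfix
      push_neg at hfix
      -- every nontrivial element of P has a fixed point; derive a contradiction
      have hPbot : P ≠ ⊥ := by
        intro hb
        rw [hb] at hPcard
        simp at hPcard
      obtain ⟨a0, ha0⟩ := Subgroup.ne_bot_iff_exists_ne_one.mp hPbot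
      obtain ⟨a, haP⟩ := a0
      have ha1 : a ≠ 1 := by
        simpa [Subtype.ext_iff] using ha0
      obtain ⟨x0, hx0⟩ := hfix a haP ha1
      have haO : orderOf a = 3 := hord3 a haP ha1
      have hsupp : a.support.card = 3 := aux_supp_card a haO x0 hx0
      have hScard : (Finset.univ.filter (fun z => a z = z)).card = 3 := by
        have hcompl : (Finset.univ.filter (fun z => a z = z)) = a.supportᶜ := by
          ext z
          simp [Equiv.Perm.mem_support]
        rw [hcompl, Finset.card_compl, hsupp]
        simp
      have hTcard : (Finset.univ.filter (fun z => a z ≠ z)).card = 3 := by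
        have : (Finset.univ.filter (fun z => a z ≠ z)) = a.support := by
          ext z
          simp [Equiv.Perm.mem_support]
        rw [this, hsupp]
      have hSinv : ∀ q ∈ P, ∀ y : Fin 6, a y = y → a (q y) = q y := by
        intro q hq y hy
        have hcm := congrArg (fun e : Equiv.Perm (Fin 6) => e y) (hc a haP q hq)
        simp only [Equiv.Perm.mul_apply] at hcm
        rw [hcm, hy]
      have hTinv : ∀ q ∈ P, ∀ y : Fin 6, a y ≠ y → a (q y) ≠ q y := by
        intro q hq y hy h
        have hcm := congrArg (fun e : Equiv.Perm (Fin 6) => e y) (hc a haP q hq)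
        simp only [Equiv.Perm.mul_apply] at hcm
        rw [hcm] at h
        exact hy (q.injective h)
      by_cases hbex : ∃ b ∈ P, (∃ y, a y = y ∧ b y ≠ y) ∧ (∃ z, a z ≠ z ∧ b z ≠ z)
      · obtain ⟨b, hbP, ⟨y0, hy0S, hy0m⟩, ⟨z0, hz0T, hz0m⟩⟩ := hbex
        have hbS : ∀ y ∈ Finset.univ.filter (fun z => a z = z), b y ≠ y := by
          refine aux_moves b (hcube b hbP) _ hScard ?_ y0 (by simp [hy0S]) hy0m
          intro y hy
          simp only [Finset.mem_filter, Finset.mem_univ, true_and] at hy ⊢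
          exact hSinv b hbP y hy
        have hbT : ∀ y ∈ Finset.univ.filter (fun z => a z ≠ z), b y ≠ y := by
          refine aux_moves b (hcube b hbP) _ hTcard ?_ z0 (by simp [hz0T]) hz0m
          intro y hy
          simp only [Finset.mem_filter, Finset.mem_univ, true_and] at hy ⊢
          exact hTinv b hbP y hy
        have hbfree : ∀ x : Fin 6, b x ≠ x := by
          intro x
          by_cases hax : a x = x
          · exact hbS x (by simp [hax])
          · exact hbT x (by simp [hax])
        have hb1 : b ≠ 1 := fun h => hy0m (by rw [h]; rfl)
        obtain ⟨x, hx⟩ := hfix b hbP hb1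
        exact hbfree x hx
      · push_neg at hbex
        -- each element of P fixes S pointwise or T pointwise
        by_cases hall : ∀ b ∈ P, ∀ y : Fin 6, a y = y → b y = y
        · -- P fixes S pointwise: P embeds into Perm of the support, card ≤ 6 < 9
          exact aux_card_contra P hPcard (fun z => a z ≠ z) hTcard
            (fun q hq x hx => hall q hq x (not_not.mp hx)) hTinv
        · push_neg at hall
          obtain ⟨b1, hb1P, y1, hay1, hb1y1⟩ := hall
          have hb1T : ∀ z, a z ≠ z → b1 z = z :=
            hbex b1 hb1P ⟨y1, hay1, hb1y1⟩
          have hclaimT : ∀ b ∈ P, ∀ z : Fin 6, a z ≠ z → b z = z := by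
            intro b hbP
            by_cases hbS : ∃ y, a y = y ∧ b y ≠ y
            · exact hbex b hbP hbS
            · push_neg at hbS
              have hcP : b1 * b ∈ P := mul_mem hb1P hbP
              have hcy1 : (b1 * b) y1 ≠ y1 := by
                have : (b1 * b) y1 = b1 y1 := by
                  simp only [Equiv.Perm.mul_apply]
                  rw [hbS y1 hay1]
                rw [this]
                exact hb1y1
              have hcT : ∀ z, a z ≠ z → (b1 * b) z = z :=
                hbex _ hcP ⟨y1, hay1, hcy1⟩
              intro z hz
              have hbz : a (b z) ≠ b z := hTinv b hbP z hz
              have h1 : (b1 * b) z = z := hcT z hz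
              rw [Equiv.Perm.mul_apply, hb1T _ hbz] at h1
              exact h1
          -- apply to a itself: a fixes everything, contradiction
          apply ha1
          apply Equiv.ext
          intro z
          simp only [Equiv.Perm.one_apply]
          by_cases hz : a z = z
          · exact hz
          · exact hclaimT a haP z hz
    obtain ⟨p, hpP, hp1, hpfree⟩ := hclaim
    exact ⟨p, hPle hpP, hord3 p hpP hp1, hpfree⟩
  · -- Case A : 9 does not divide |G|; any element of order 3 is fixed-point free
    haveI : Fintype ↥G := Fintype.ofFinite _
    obtain ⟨g, hg⟩ := exists_prime_orderOf_dvd_card (G := ↥G) 3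
      (by rwa [← Nat.card_eq_fintype_card])
    have hgord : orderOf (g : Equiv.Perm (Fin 6)) = 3 := by
      rw [Subgroup.orderOf_coe, hg]
    refine ⟨g, g.2, hgord, ?_⟩
    intro x hx
    have hgst : g ∈ MulAction.stabilizer G x := hx
    have hord : orderOf (⟨g, hgst⟩ : MulAction.stabilizer G x) = 3 := by
      rw [Subgroup.orderOf_mk, hg]
    have hdvd : (3 : ℕ) ∣ Nat.card (MulAction.stabilizer G x) :=
      hord ▸ orderOf_dvd_natCard _
    have hkey := key x
    omega
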